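/- arXiv:1201.4780 — 5 statements merged into one kernel-verified Lean document; each statement's English description precedes it below -/
import Mathlib

section
/- For every real number k, the 2×2 complex matrix M_k = (1/√2)·[[−e^{−ik}, e^{−ik}], [e^{ik}, e^{ik}]] has exactly the eigenvalues e^{iω_k} and e^{i(π−ω_k)}, where ω_k = arcsin((sin k)/√2) ∈ [−π/2, π/2]. -/
private lemma hadamard_quadratic_key (s E F A B μ : ℂ) (hs : s ≠ 0) (hsq : s*s=2)
    (e1 : F*E=1) (hprod : A*B=-1) (hsum : s*(A+B)=E-F) :
    (μ + s⁻¹*F)*(μ - s⁻¹*E) - s⁻¹*F*(s⁻¹*E) = (μ-A)*(μ-B) := by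
  field_simp
  linear_combination (μ*s)*hsum - 2*e1 - (A*B)*hsq - 2*hprod

/-- The Fourier-transformed one-step evolution matrix of the Hadamard walk. -/
noncomputable def hadamardWalkFourierMatrix (k : ℝ) : Matrix (Fin 2) (Fin 2) ℂ :=
  ((Real.sqrt 2 : ℂ))⁻¹ •
    !![-Complex.exp (-(k : ℂ) * Complex.I), Complex.exp (-(k : ℂ) * Complex.I);
       Complex.exp ((k : ℂ) * Complex.I), Complex.exp ((k : ℂ) * Complex.I)]

theorem eigenvalues_hadamardWalkFourierMatrix (k : ℝ) :
    spectrum ℂ (hadamardWalkFourierMatrix k) =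
      {Complex.exp ((Real.arcsin (Real.sin k / Real.sqrt 2) : ℂ) * Complex.I),
       Complex.exp (((Real.pi : ℂ) - (Real.arcsin (Real.sin k / Real.sqrt 2) : ℂ)) * Complex.I)} := by
  set ω : ℝ := Real.arcsin (Real.sin k / Real.sqrt 2) with hω
  have hs2 : (Real.sqrt 2 : ℂ) ≠ 0 := by
    simp [Real.sqrt_ne_zero'.mpr (by norm_num : (0:ℝ) < 2)]
  have hsq : (Real.sqrt 2 : ℂ) * (Real.sqrt 2 : ℂ) = 2 := by
    rw [← Complex.ofReal_mul, Real.mul_self_sqrt (by norm_num)]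
    norm_num
  have hs1 : (1:ℝ) ≤ Real.sqrt 2 := by
    rw [show (1:ℝ) = Real.sqrt 1 by simp]
    exact Real.sqrt_le_sqrt (by norm_num)
  have hs0 : (0:ℝ) < Real.sqrt 2 := by linarith
  have hprod : Complex.exp ((ω : ℂ) * Complex.I) *
      Complex.exp (((Real.pi : ℂ) - (ω : ℂ)) * Complex.I) = -1 := by
    rw [← Complex.exp_add]
    have : (ω : ℂ) * Complex.I + ((Real.pi : ℂ) - (ω : ℂ)) * Complex.I
        = (Real.pi : ℂ) * Complex.I := by ring
    rw [this, Complex.exp_pi_mul_I]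
  have hsinω : Real.sin ω = Real.sin k / Real.sqrt 2 := by
    rw [hω, Real.sin_arcsin]
    · rw [le_div_iff₀ hs0]
      nlinarith [Real.neg_one_le_sin k]
    · rw [div_le_one hs0]
      nlinarith [Real.sin_le_one k]
  have hl2 : Complex.exp (((Real.pi : ℂ) - (ω : ℂ)) * Complex.I)
      = -Complex.exp (-(ω:ℂ) * Complex.I) := by
    have h : ((Real.pi : ℂ) - (ω : ℂ)) * Complex.I
        = (Real.pi : ℂ) * Complex.I + (-(ω:ℂ)) * Complex.I := by ring
    rw [h, Complex.exp_add, Complex.exp_pi_mul_I]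
    ring
  have hsum : (Real.sqrt 2 : ℂ) *
      (Complex.exp ((ω : ℂ) * Complex.I) + Complex.exp (((Real.pi : ℂ) - (ω : ℂ)) * Complex.I))
      = Complex.exp ((k:ℂ)*Complex.I) - Complex.exp (-((k:ℂ)*Complex.I)) := by
    rw [show -((k:ℂ)*Complex.I) = (-(k:ℂ))*Complex.I by ring]
    rw [hl2, Complex.exp_mul_I, Complex.exp_mul_I, Complex.exp_mul_I, Complex.exp_mul_I]
    simp only [Complex.cos_neg, Complex.sin_neg, ← Complex.ofReal_sin, ← Complex.ofReal_cos]
    rw [hsinω]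
    push_cast
    field_simp
    ring
  have e1 : Complex.exp (-((k:ℂ)*Complex.I)) * Complex.exp ((k:ℂ)*Complex.I) = 1 := by
    rw [← Complex.exp_add]; simp
  have hdet : ∀ μ : ℂ,
      (algebraMap ℂ (Matrix (Fin 2) (Fin 2) ℂ) μ - hadamardWalkFourierMatrix k).det
        = (μ - Complex.exp ((ω : ℂ) * Complex.I)) *
          (μ - Complex.exp (((Real.pi : ℂ) - (ω : ℂ)) * Complex.I)) := by
    intro μ
    rw [Matrix.det_fin_two]
    simp [hadamardWalkFourierMatrix, Matrix.algebraMap_matrix_apply, Matrix.one_apply]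
    have := hadamard_quadratic_key (Real.sqrt 2 : ℂ) (Complex.exp ((k:ℂ)*Complex.I))
      (Complex.exp (-((k:ℂ)*Complex.I))) (Complex.exp ((ω : ℂ) * Complex.I))
      (Complex.exp (((Real.pi : ℂ) - (ω : ℂ)) * Complex.I)) μ hs2 hsq e1 hprod hsum
    linear_combination this
  ext μ
  simp only [spectrum.mem_iff, Matrix.isUnit_iff_isUnit_det, isUnit_iff_ne_zero, not_not,
    hdet μ, mul_eq_zero, sub_eq_zero, Set.mem_insert_iff, Set.mem_singleton_iff]
end

section
/- For the Hadamard walk on the integer line, for every t ∈ ℕ with t ≥ 1 and every integer n with −t ≤ n < t and t − n even, setting l = (t−n)/2 (so 1 ≤ l ≤ t), the amplitudes are given by the path-counting formulas Ψ_L(n,t) = 2^{−t/2} · Σ_{k∈ℤ} C(l−1,k)·C(t−l,k)·(−1)^{l−k−1} and Ψ_R(n,t) = 2^{−t/2} · Σ_{k∈ℤ} C(l−1,k−1)·C(t−l,k)·(−1)^{l−k}, where C(m,j) denotes the binomial coefficient, with the convention C(m,j) = 0 unless 0 ≤ j ≤ m. -/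
/-- The Hadamard walk on the integer line: `hadamardWalk t n = (Ψ_L(n,t), Ψ_R(n,t))`. -/
noncomputable def hadamardWalk : ℕ → ℤ → ℂ × ℂ
  | 0, n => if n = 0 then (0, 1) else (0, 0)
  | t + 1, n =>
      (((hadamardWalk t (n + 1)).2 - (hadamardWalk t (n + 1)).1) / (Real.sqrt 2 : ℂ),
       ((hadamardWalk t (n - 1)).2 + (hadamardWalk t (n - 1)).1) / (Real.sqrt 2 : ℂ))

/-- Binomial coefficient `C(m,j)` for integer arguments, with the convention that
`C(m,j) = 0` unless `0 ≤ j ≤ m`. -/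
noncomputable def intChoose (m j : ℤ) : ℂ :=
  if 0 ≤ j ∧ j ≤ m then (Nat.choose m.toNat j.toNat : ℂ) else 0

lemma hw_sqrt2_ne : (Real.sqrt 2 : ℂ) ≠ 0 := by
  have : (0:ℝ) < Real.sqrt 2 := Real.sqrt_pos.mpr (by norm_num)
  exact_mod_cast Complex.ofReal_ne_zero.mpr (ne_of_gt this)

lemma hw_zero : ∀ (t : ℕ) (n : ℤ), (n < -(t:ℤ) ∨ (t:ℤ) < n) → hadamardWalk t n = (0, 0) := by
  intro t
  induction t with
  | zero =>
    intro n h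
    rw [hadamardWalk, if_neg (by push_cast at h; omega)]
  | succ t ih =>
    intro n h
    push_cast at h
    rw [hadamardWalk, ih (n+1) (by omega), ih (n-1) (by omega)]
    simp

lemma hw_right : ∀ t : ℕ, hadamardWalk t (t:ℤ) = (0, 1 / (Real.sqrt 2:ℂ) ^ t) := by
  intro t
  induction t with
  | zero => simp [hadamardWalk]
  | succ t ih =>
    rw [show ((t+1:ℕ):ℤ) = (t:ℤ)+1 by push_cast; ring, hadamardWalk,
        show (t:ℤ)+1+1 = (t:ℤ)+2 by ring, show (t:ℤ)+1-1 = (t:ℤ) by ring,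
        hw_zero t ((t:ℤ)+2) (by omega), ih]
    have hs := hw_sqrt2_ne
    rw [Prod.ext_iff]
    constructor
    · simp
    · simp only [Prod.snd, Prod.fst]
      field_simp
      ring
lemma intChoose_neg (m j : ℤ) (h : j < 0) : intChoose m j = 0 := by
  simp [intChoose]; omega

lemma intChoose_gt (m j : ℤ) (h : m < j) : intChoose m j = 0 := by
  simp [intChoose]; omega

lemma intChoose_pascal (m j : ℤ) (hm : 1 ≤ m) :
    intChoose m j = intChoose (m-1) (j-1) + intChoose (m-1) j := by
  unfold intChoose
  split_ifs with h1 h2 h3 h2 h3 <;> try (exfalso; omega)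
  · have hm' : m.toNat = (m-1).toNat + 1 := by omega
    have hj' : j.toNat = (j-1).toNat + 1 := by omega
    rw [hm', hj', Nat.choose_succ_succ]
    push_cast; ring
  · have hj : j = m := by omega
    subst hj
    have h' : (j-1).toNat = (j-1).toNat := rfl
    have e1 : j.toNat.choose j.toNat = 1 := Nat.choose_self _
    have e2 : (j-1).toNat.choose (j-1).toNat = 1 := Nat.choose_self _
    rw [e1, e2]; norm_num
  · have hj : j.toNat = 0 := by omega
    simp [hj]
  · simp

lemma sum_Icc_top (a b : ℤ) (h : a ≤ b + 1) (f : ℤ → ℂ) :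
    ∑ k ∈ Finset.Icc a (b+1), f k = (∑ k ∈ Finset.Icc a b, f k) + f (b+1) := by
  have e : Finset.Icc a (b+1) = insert (b+1) (Finset.Icc a b) := by
    ext x; simp [Finset.mem_Icc]; omega
  rw [e, Finset.sum_insert (by simp [Finset.mem_Icc])]
  ring

lemma sum_Icc_bot (a b : ℤ) (h : a ≤ b + 1) (f : ℤ → ℂ) :
    ∑ k ∈ Finset.Icc (a-1) b, f k = f (a-1) + ∑ k ∈ Finset.Icc a b, f k := by
  have e : Finset.Icc (a-1) b = insert (a-1) (Finset.Icc a b) := by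
    ext x; simp [Finset.mem_Icc]; omega
  rw [e, Finset.sum_insert (by simp [Finset.mem_Icc])]

lemma sum_shift_one (a b : ℤ) (f : ℤ → ℂ) :
    ∑ k ∈ Finset.Icc a b, f (k-1) = ∑ k ∈ Finset.Icc (a-1) (b-1), f k := by
  apply Finset.sum_nbij' (fun k => k - 1) (fun k => k + 1) <;>
    intros <;> simp_all [Finset.mem_Icc] <;> omega

noncomputable def SL (t l : ℤ) : ℂ :=
  ∑ k ∈ Finset.Icc (0 : ℤ) t, intChoose (l - 1) k * intChoose (t - l) k * (-1 : ℂ) ^ (l - k - 1)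

noncomputable def SR (t l : ℤ) : ℂ :=
  ∑ k ∈ Finset.Icc (0 : ℤ) t, intChoose (l - 1) (k - 1) * intChoose (t - l) k * (-1 : ℂ) ^ (l - k)

lemma SL_one (t : ℤ) (ht : 1 ≤ t) : SL t 1 = 1 := by
  unfold SL
  rw [Finset.sum_eq_single_of_mem 0 (by simp [Finset.mem_Icc]; omega)]
  · have e1 : intChoose (1-1) 0 = 1 := by simp [intChoose]
    have e2 : intChoose (t-1) 0 = 1 := by simp [intChoose]; omega
    rw [e1, e2]; norm_num
  · intro b hb hb0
    rw [intChoose_gt (1-1) b (by simp [Finset.mem_Icc] at hb; omega)]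
    ring

lemma SR_self (t : ℤ) : SR t t = 0 := by
  unfold SR
  apply Finset.sum_eq_zero
  intro k hk
  simp only [Finset.mem_Icc] at hk
  rcases eq_or_lt_of_le hk.1 with h | h
  · rw [intChoose_neg (t-1) (k-1) (by omega)]; ring
  · rw [show t - t = (0:ℤ) by ring, intChoose_gt 0 k (by omega)]; ring

lemma key_R (t l : ℤ) (ht : 0 ≤ t) (h1 : 1 ≤ l) (h2 : l ≤ t) :
    SR (t+1) l = SR t l + SL t l := by
  unfold SR SL
  have step1 : ∀ k : ℤ,
      intChoose (l-1) (k-1) * intChoose (t+1-l) k * (-1:ℂ)^(l-k)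
      = intChoose (l-1) (k-1) * intChoose (t-l) (k-1) * (-1:ℂ)^(l-k)
      + intChoose (l-1) (k-1) * intChoose (t-l) k * (-1:ℂ)^(l-k) := by
    intro k
    rw [intChoose_pascal (t+1-l) k (by omega), show t+1-l-1 = t-l by ring]
    ring
  rw [Finset.sum_congr rfl (fun k _ => step1 k), Finset.sum_add_distrib]
  conv_rhs => rw [add_comm]
  congr 1
  · -- shifted sum = SL t l
    have e : ∀ k : ℤ, intChoose (l-1) (k-1) * intChoose (t-l) (k-1) * (-1:ℂ)^(l-k)
        = (fun j => intChoose (l-1) j * intChoose (t-l) j * (-1:ℂ)^(l-j-1)) (k-1) := by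
      intro k
      simp only
      congr 1
      rw [show l-(k-1)-1 = l-k by ring]
    rw [Finset.sum_congr rfl (fun k _ => e k),
        sum_shift_one 0 (t+1) (fun j => intChoose (l-1) j * intChoose (t-l) j * (-1:ℂ)^(l-j-1)),
        show (0:ℤ)-1 = -1 by ring, show t+1-1 = t by ring,
        show (-1:ℤ) = 0-1 by ring,
        sum_Icc_bot 0 t (by omega) (fun j => intChoose (l-1) j * intChoose (t-l) j * (-1:ℂ)^(l-j-1))]
    rw [intChoose_neg (l-1) (0-1) (by omega)]
    simp
  · -- drop top term
    rw [sum_Icc_top 0 t (by omega), intChoose_gt (t-l) (t+1) (by omega)]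
    simp

lemma key_L (t l : ℤ) (ht : 0 ≤ t) (h1 : 2 ≤ l) (h2 : l ≤ t+1) :
    SL (t+1) l = SR t (l-1) - SL t (l-1) := by
  unfold SR SL
  have step1 : ∀ k : ℤ,
      intChoose (l-1) k * intChoose (t+1-l) k * (-1:ℂ)^(l-k-1)
      = intChoose (l-1-1) (k-1) * intChoose (t-(l-1)) k * (-1:ℂ)^(l-1-k)
      - intChoose (l-1-1) k * intChoose (t-(l-1)) k * (-1:ℂ)^(l-1-k-1) := by
    intro k
    rw [intChoose_pascal (l-1) k (by omega),
        show t+1-l = t-(l-1) by ring, show l-1-1 = l-2 by ring]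
    have e1 : (-1:ℂ)^(l-1-k) = (-1:ℂ)^(l-k-1) := by rw [show l-1-k = l-k-1 by ring]
    have e2 : (-1:ℂ)^(l-1-k-1) = -(-1:ℂ)^(l-k-1) := by
      rw [show l-1-k-1 = (l-k-1) + (-1) by ring, zpow_add₀ (by norm_num : (-1:ℂ) ≠ 0)]
      norm_num
    rw [e1, e2]
    ring
  rw [Finset.sum_congr rfl (fun k _ => step1 k), Finset.sum_sub_distrib]
  congr 1
  · rw [sum_Icc_top 0 t (by omega), intChoose_gt (t-(l-1)) (t+1) (by omega)]
    simp
  · rw [sum_Icc_top 0 t (by omega), intChoose_gt (t-(l-1)) (t+1) (by omega)]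
    simp

lemma hw_main : ∀ t : ℕ, 1 ≤ t → ∀ n l : ℤ, -(t:ℤ) ≤ n → n < (t:ℤ) →
    (2:ℤ) ∣ ((t:ℤ) - n) → l = ((t:ℤ) - n) / 2 →
    (hadamardWalk t n).1 = (1 / (Real.sqrt 2:ℂ) ^ t) * SL (t:ℤ) l ∧
    (hadamardWalk t n).2 = (1 / (Real.sqrt 2:ℂ) ^ t) * SR (t:ℤ) l := by
  intro t
  induction t with
  | zero => intro h; exact absurd h (by norm_num)
  | succ t ih =>
    intro _ n l hn1 hn2 hpar hl
    obtain ⟨c, hc⟩ := hpar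
    push_cast at hn1 hn2 hc hl ⊢
    have hs := hw_sqrt2_ne
    have hl1 : 1 ≤ l := by omega
    have hl2 : l ≤ (t:ℤ) + 1 := by omega
    rcases Nat.eq_zero_or_pos t with rfl | ht
    · -- base case t+1 = 1
      have hn : n = -1 := by omega
      have hlv : l = 1 := by omega
      subst hn
      norm_num
      rw [hadamardWalk, hlv]
      norm_num
      rw [show hadamardWalk 0 0 = (0,1) by rw [hadamardWalk]; norm_num,
          show hadamardWalk 0 (-2) = (0,0) by rw [hadamardWalk]; norm_num,
          SL_one 1 (by norm_num), SR_self 1]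
      norm_num
    · -- inductive step, ht : 1 ≤ t
      have htz : (1:ℤ) ≤ (t:ℤ) := by exact_mod_cast ht
      rw [hadamardWalk]
      constructor
      · -- left component
        rcases eq_or_lt_of_le hl1 with h1 | h1
        · -- l = 1 : n + 1 = t
          have hn' : n + 1 = (t:ℤ) := by omega
          simp only [Prod.fst]
          rw [hn', hw_right t, ← h1, SL_one ((t:ℤ)+1) (by omega)]
          simp only [Prod.snd, Prod.fst]
          field_simp
          ring
        · -- 2 ≤ l
          have IH := ih ht (n+1) (l-1) (by omega) (by omega) ⟨c-1, by push_cast; omega⟩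
            (by push_cast; omega)
          simp only [Prod.fst]
          rw [IH.1, IH.2, show ((t:ℤ)+1) = ((t:ℤ)+1) from rfl]
          have hk := key_L (t:ℤ) l (by omega) (by omega) (by omega)
          rw [hk, pow_succ]
          field_simp
      · -- right component
        rcases eq_or_lt_of_le hl2 with h2 | h2
        · -- l = t + 1 : n - 1 out of range
          have hn' : n - 1 = -((t:ℤ)+2) := by omega
          simp only [Prod.snd]
          rw [hn', hw_zero t (-((t:ℤ)+2)) (by omega), h2,
              show SR ((t:ℤ)+1) ((t:ℤ)+1) = 0 from SR_self _]
          simp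
        · -- l ≤ t
          have IH := ih ht (n-1) l (by omega) (by omega) ⟨c, by push_cast; omega⟩
            (by push_cast; omega)
          simp only [Prod.snd]
          rw [IH.1, IH.2]
          have hk := key_R (t:ℤ) l (by omega) (by omega) (by omega)
          rw [hk, pow_succ]
          field_simp

theorem hadamardWalk_path_counting
    (t : ℕ) (ht : 1 ≤ t) (n : ℤ) (hn1 : -(t : ℤ) ≤ n) (hn2 : n < (t : ℤ))
    (hpar : (2 : ℤ) ∣ ((t : ℤ) - n)) (l : ℤ) (hl : l = ((t : ℤ) - n) / 2) :
    (1 ≤ l ∧ l ≤ (t : ℤ)) ∧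
    (hadamardWalk t n).1 =
      (1 / (Real.sqrt 2 : ℂ) ^ t) *
        ∑ k ∈ Finset.Icc (0 : ℤ) (t : ℤ),
          intChoose (l - 1) k * intChoose ((t : ℤ) - l) k * (-1 : ℂ) ^ (l - k - 1) ∧
    (hadamardWalk t n).2 =
      (1 / (Real.sqrt 2 : ℂ) ^ t) *
        ∑ k ∈ Finset.Icc (0 : ℤ) (t : ℤ),
          intChoose (l - 1) (k - 1) * intChoose ((t : ℤ) - l) k * (-1 : ℂ) ^ (l - k) := by
  have H := hw_main t ht n l hn1 hn2 hpar hl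
  unfold SL SR at H
  obtain ⟨c, hc⟩ := hpar
  refine ⟨⟨by omega, by omega⟩, H.1, H.2⟩
end

section
/- Let U = [[a,b],[c,d]] be a 2×2 unitary complex matrix with abcd ≠ 0 and let φ = (α,β) ∈ ℂ² with |α|² + |β|² = 1. Then the first and second moments of Konno's density satisfy ∫_{−|a|}^{|a|} x·f(x;φ) dx = −μ_φ·(1 − √(1−|a|²)) and ∫_{−|a|}^{|a|} x²·f(x;φ) dx = 1 − √(1−|a|²). -/
open MeasureTheory intervalIntegral Set Real
open scoped Interval

namespace KonnoAux

/-- integral of `1/√(r²-x²)` -/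
lemma deriv1 {r : ℝ} (hr : 0 < r) {x : ℝ} (hx : x ∈ Set.Ioo (-r) r) :
    HasDerivAt (fun y => Real.arcsin (y / r)) (1 / Real.sqrt (r ^ 2 - x ^ 2)) x := by
  have h1 : x / r ≠ -1 := by
    intro h; rw [div_eq_iff hr.ne'] at h; simp at h; nlinarith [hx.1]
  have h2 : x / r ≠ 1 := by
    intro h; rw [div_eq_iff hr.ne'] at h; simp at h; nlinarith [hx.2]
  have hd := (Real.hasDerivAt_arcsin h1 h2).comp x ((hasDerivAt_id x).div_const r)
  have hsq : Real.sqrt (1 - (x / r) ^ 2) = Real.sqrt (r ^ 2 - x ^ 2) / r := by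
    rw [show 1 - (x / r) ^ 2 = (r ^ 2 - x ^ 2) / r ^ 2 by field_simp,
      Real.sqrt_div (by nlinarith [hx.1, hx.2]), Real.sqrt_sq hr.le]
  have hpos : 0 < Real.sqrt (r ^ 2 - x ^ 2) := Real.sqrt_pos.2 (by nlinarith [hx.1, hx.2])
  refine hd.congr_deriv (Eq.symm ?_)
  rw [hsq]
  field_simp

lemma int1 {r : ℝ} (hr : 0 < r) :
    IntervalIntegrable (fun x => 1 / Real.sqrt (r ^ 2 - x ^ 2)) volume (-r) r := by
  have hmin : min (-r) r = -r := min_eq_left (by linarith)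
  have hmax : max (-r) r = r := max_eq_right (by linarith)
  apply intervalIntegrable_deriv_of_nonneg (g := fun y => Real.arcsin (y / r))
  · exact (Real.continuous_arcsin.comp (continuous_id.div_const r)).continuousOn
  · rw [hmin, hmax]; exact fun x hx => deriv1 hr hx
  · intro x hx; positivity

lemma val1 {r : ℝ} (hr : 0 < r) :
    ∫ x in (-r)..r, 1 / Real.sqrt (r ^ 2 - x ^ 2) = Real.pi := by
  have hc : Continuous fun y : ℝ => Real.arcsin (y / r) :=
    Real.continuous_arcsin.comp (continuous_id.div_const r)
  rw [integral_eq_sub_of_hasDeriv_right_of_le (by linarith) hc.continuousOn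
      (fun x hx => (deriv1 hr hx).hasDerivWithinAt) (int1 hr)]
  rw [div_self hr.ne', neg_div, div_self hr.ne', Real.arcsin_neg, Real.arcsin_one]
  ring

/-- integral of `1/((1-x²)√(r²-x²))` -/
lemma deriv2 {r : ℝ} (hr : 0 < r) (hr1 : r < 1) {x : ℝ} (hx : x ∈ Set.Ioo (-r) r) :
    HasDerivAt (fun y => (Real.sqrt (1 - r ^ 2))⁻¹ *
        Real.arcsin (Real.sqrt (1 - r ^ 2) * y / (r * Real.sqrt (1 - y ^ 2))))
      (1 / ((1 - x ^ 2) * Real.sqrt (r ^ 2 - x ^ 2))) x := by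
  set s := Real.sqrt (1 - r ^ 2) with hs_def
  have hs2 : s ^ 2 = 1 - r ^ 2 := Real.sq_sqrt (by nlinarith)
  have hs : 0 < s := Real.sqrt_pos.2 (by nlinarith)
  have hx2 : x ^ 2 < r ^ 2 := by nlinarith [hx.1, hx.2]
  have h1x : 0 < 1 - x ^ 2 := by nlinarith
  set t := Real.sqrt (1 - x ^ 2) with ht_def
  have ht2 : t ^ 2 = 1 - x ^ 2 := Real.sq_sqrt h1x.le
  have ht : 0 < t := Real.sqrt_pos.2 h1x
  have hq : 0 < Real.sqrt (r ^ 2 - x ^ 2) := Real.sqrt_pos.2 (by nlinarith)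
  have hinner : HasDerivAt (fun y : ℝ => 1 - y ^ 2) (-(2 * x)) x := by
    simpa using ((hasDerivAt_pow 2 x).const_sub 1)
  have hsqrt : HasDerivAt (fun y : ℝ => Real.sqrt (1 - y ^ 2)) (1 / (2 * t) * (-(2 * x))) x :=
    (Real.hasDerivAt_sqrt h1x.ne').comp x hinner
  have hden : HasDerivAt (fun y : ℝ => r * Real.sqrt (1 - y ^ 2))
      (r * (1 / (2 * t) * (-(2 * x)))) x := hsqrt.const_mul r
  have hnum : HasDerivAt (fun y : ℝ => s * y) s x := by
    simpa using (hasDerivAt_id x).const_mul s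
  have hu : HasDerivAt (fun y : ℝ => s * y / (r * Real.sqrt (1 - y ^ 2)))
      ((s * (r * t) - s * x * (r * (1 / (2 * t) * (-(2 * x))))) / (r * t) ^ 2) x :=
    hnum.div hden (by positivity)
  have hu2 : (s * x / (r * t)) ^ 2 < 1 := by
    rw [div_pow, div_lt_one (by positivity)]
    have : (s * x) ^ 2 = (1 - r ^ 2) * x ^ 2 := by rw [mul_pow, hs2]
    rw [this, mul_pow, ht2]; nlinarith
  have hune : s * x / (r * t) ≠ -1 := by intro h; rw [h] at hu2; norm_num at hu2
  have hune' : s * x / (r * t) ≠ 1 := by intro h; rw [h] at hu2; norm_num at hu2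
  have harc := ((Real.hasDerivAt_arcsin hune hune').comp x hu).const_mul s⁻¹
  refine harc.congr_deriv (Eq.symm ?_)
  have hru : Real.sqrt (1 - (s * x / (r * t)) ^ 2) = Real.sqrt (r ^ 2 - x ^ 2) / (r * t) := by
    have : 1 - (s * x / (r * t)) ^ 2 = (r ^ 2 - x ^ 2) / (r * t) ^ 2 := by
      rw [div_pow]; field_simp; nlinarith [hs2, ht2]
    rw [this, Real.sqrt_div (by nlinarith), Real.sqrt_sq (by positivity)]
  rw [hru]
  rw [show (1 : ℝ) - x ^ 2 = t ^ 2 from ht2.symm]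
  field_simp
  linear_combination (-1 : ℝ) * ht2

lemma cont2 {r : ℝ} (hr : 0 < r) (hr1 : r < 1) :
    ContinuousOn (fun y => (Real.sqrt (1 - r ^ 2))⁻¹ *
        Real.arcsin (Real.sqrt (1 - r ^ 2) * y / (r * Real.sqrt (1 - y ^ 2))))
      (Set.Icc (-r) r) := by
  apply ContinuousOn.mul continuousOn_const
  apply Real.continuous_arcsin.comp_continuousOn
  apply ContinuousOn.div
  · exact (continuous_const.mul continuous_id).continuousOn
  · exact (continuous_const.mul ((continuous_const.sub (continuous_pow 2)).sqrt)).continuousOn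
  · intro x hx
    have hx2 : x ^ 2 ≤ r ^ 2 := sq_le_sq' hx.1 hx.2
    have : 0 < Real.sqrt (1 - x ^ 2) := Real.sqrt_pos.2 (by nlinarith)
    positivity

lemma int2 {r : ℝ} (hr : 0 < r) (hr1 : r < 1) :
    IntervalIntegrable (fun x => 1 / ((1 - x ^ 2) * Real.sqrt (r ^ 2 - x ^ 2))) volume (-r) r := by
  have hmin : min (-r) r = -r := min_eq_left (by linarith)
  have hmax : max (-r) r = r := max_eq_right (by linarith)
  apply intervalIntegrable_deriv_of_nonneg
    (g := fun y => (Real.sqrt (1 - r ^ 2))⁻¹ *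
        Real.arcsin (Real.sqrt (1 - r ^ 2) * y / (r * Real.sqrt (1 - y ^ 2))))
  · rw [Set.uIcc_of_le (by linarith)]; exact cont2 hr hr1
  · rw [hmin, hmax]; exact fun x hx => deriv2 hr hr1 hx
  · rw [hmin, hmax]
    intro x hx
    have h1x : 0 < 1 - x ^ 2 := by nlinarith [hx.1, hx.2]
    positivity

lemma val2 {r : ℝ} (hr : 0 < r) (hr1 : r < 1) :
    ∫ x in (-r)..r, 1 / ((1 - x ^ 2) * Real.sqrt (r ^ 2 - x ^ 2)) =
      Real.pi / Real.sqrt (1 - r ^ 2) := by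
  have hs : 0 < Real.sqrt (1 - r ^ 2) := Real.sqrt_pos.2 (by nlinarith)
  rw [integral_eq_sub_of_hasDeriv_right_of_le (by linarith) (cont2 hr hr1)
      (fun x hx => (deriv2 hr hr1 hx).hasDerivWithinAt) (int2 hr hr1)]
  have h1 : Real.sqrt (1 - r ^ 2) * r / (r * Real.sqrt (1 - r ^ 2)) = 1 := by
    rw [mul_comm]; exact div_self (by positivity)
  have h2 : Real.sqrt (1 - r ^ 2) * -r / (r * Real.sqrt (1 - r ^ 2)) = -1 := by
    rw [mul_neg, neg_div, h1]
  simp only [neg_sq]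
  rw [h1, h2, Real.arcsin_neg, Real.arcsin_one]
  field_simp
  ring

lemma odd_zero {f : ℝ → ℝ} {r : ℝ} (hf : ∀ x, f (-x) = -f x) :
    ∫ x in (-r)..r, f x = 0 := by
  have h := intervalIntegral.integral_comp_neg (a := -r) (b := r) f
  simp only [neg_neg] at h
  have h2 : (∫ x in (-r)..r, f (-x)) = ∫ x in (-r)..r, -f x := by
    simp only [hf]
  rw [h2, intervalIntegral.integral_neg] at h
  linarith

lemma moments_aux (r μ : ℝ) (hr : 0 < r) (hr1 : r < 1) :
    (∫ x in (-r)..r,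
        x * (if -r < x ∧ x < r then
          Real.sqrt (1 - r ^ 2) / (Real.pi * (1 - x ^ 2) * Real.sqrt (r ^ 2 - x ^ 2)) * (1 - μ * x)
        else 0)) = -μ * (1 - Real.sqrt (1 - r ^ 2)) ∧
    (∫ x in (-r)..r,
        x ^ 2 * (if -r < x ∧ x < r then
          Real.sqrt (1 - r ^ 2) / (Real.pi * (1 - x ^ 2) * Real.sqrt (r ^ 2 - x ^ 2)) * (1 - μ * x)
        else 0)) = 1 - Real.sqrt (1 - r ^ 2) := by
  set s := Real.sqrt (1 - r ^ 2) with hs_def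
  have hs : 0 < s := Real.sqrt_pos.2 (by nlinarith)
  have hπ : 0 < Real.pi := Real.pi_pos
  set F : ℝ → ℝ := fun x =>
    if -r < x ∧ x < r then s / (Real.pi * (1 - x ^ 2) * Real.sqrt (r ^ 2 - x ^ 2)) else 0
    with hF
  have hFeven : ∀ x, F (-x) = F x := by
    intro x
    have h : (-r < -x ∧ -x < r) ↔ (-r < x ∧ x < r) := by
      constructor <;> rintro ⟨h1, h2⟩ <;> constructor <;> linarith
    rw [hF]
    simp only [neg_sq]
    exact if_congr h rfl rfl
  have hFnonneg : ∀ x, 0 ≤ F x := by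
    intro x
    rw [hF]
    dsimp only
    split_ifs with h
    · have h1x : 0 < 1 - x ^ 2 := by nlinarith [h.1, h.2]
      positivity
    · exact le_refl 0
  have hFmeas : Measurable F := by
    apply Measurable.ite
    · exact measurableSet_Ioo (a := -r) (b := r)
    · fun_prop
    · exact measurable_const
  have hIoc : Ι (-r) r = Ioc (-r) r := uIoc_of_le (by linarith)
  have hae : ∀ᵐ x : ℝ ∂volume, x ∈ Ι (-r) r → x ∈ Ioo (-r) r := by
    have h0 : (volume : Measure ℝ) {r} = 0 := Real.volume_singleton
    filter_upwards [compl_mem_ae_iff.mpr h0] with x hx hxI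
    rw [hIoc] at hxI
    exact ⟨hxI.1, lt_of_le_of_ne hxI.2 (by simpa using hx)⟩
  have hFcongr : F =ᵐ[volume.restrict (Ι (-r) r)]
      fun x => s / Real.pi * (1 / ((1 - x ^ 2) * Real.sqrt (r ^ 2 - x ^ 2))) := by
    rw [Filter.EventuallyEq, ae_restrict_iff' measurableSet_uIoc]
    filter_upwards [hae] with x hx hxI
    obtain ⟨h1, h2⟩ := hx hxI
    have hq : 0 < Real.sqrt (r ^ 2 - x ^ 2) := Real.sqrt_pos.2 (by nlinarith)
    have h1x : 0 < 1 - x ^ 2 := by nlinarith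
    rw [hF]
    dsimp only
    rw [if_pos ⟨h1, h2⟩]
    field_simp
  have hiF : IntervalIntegrable F volume (-r) r :=
    (((int2 hr hr1).const_mul (s / Real.pi)).congr_ae hFcongr.symm)
  have hik : ∀ k : ℕ, IntervalIntegrable (fun x => x ^ k * F x) volume (-r) r := by
    intro k
    apply hiF.mono_fun ((measurable_id.pow_const k).mul hFmeas).aestronglyMeasurable
    filter_upwards [ae_restrict_mem measurableSet_uIoc] with x hxI
    rw [hIoc] at hxI
    have hxabs : |x| ≤ 1 := by
      rw [abs_le]; constructor <;> [linarith [hxI.1]; linarith [hxI.2] ]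
    simp only [Pi.mul_apply, id, norm_mul, norm_pow, Real.norm_eq_abs]
    have hp : |x| ^ k ≤ 1 := pow_le_one₀ (abs_nonneg x) hxabs
    calc |x| ^ k * |F x| ≤ 1 * |F x| := by
          apply mul_le_mul_of_nonneg_right hp (abs_nonneg _)
      _ = |F x| := one_mul _
  have I1 : (∫ x in (-r)..r, x * F x) = 0 := by
    apply odd_zero; intro x; rw [hFeven]; ring
  have I3 : (∫ x in (-r)..r, x ^ 3 * F x) = 0 := by
    apply odd_zero; intro x; rw [hFeven]; ring
  have I2 : (∫ x in (-r)..r, x ^ 2 * F x) = 1 - s := by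
    have hcong2 : ∀ᵐ x ∂volume, x ∈ Ι (-r) r → x ^ 2 * F x =
        s / Real.pi * (1 / ((1 - x ^ 2) * Real.sqrt (r ^ 2 - x ^ 2)) -
          1 / Real.sqrt (r ^ 2 - x ^ 2)) := by
      filter_upwards [hae] with x hx hxI
      obtain ⟨h1, h2⟩ := hx hxI
      have hq : 0 < Real.sqrt (r ^ 2 - x ^ 2) := Real.sqrt_pos.2 (by nlinarith)
      have h1x : 0 < 1 - x ^ 2 := by nlinarith
      rw [hF]
      dsimp only
      rw [if_pos ⟨h1, h2⟩]
      field_simp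
      ring
    rw [integral_congr_ae hcong2, intervalIntegral.integral_const_mul,
      integral_sub (int2 hr hr1) (int1 hr), val1 hr, val2 hr hr1, ← hs_def]
    field_simp
  have hi1 : IntervalIntegrable (fun x => x * F x) volume (-r) r := by
    simpa using hik 1
  constructor
  · rw [intervalIntegral.integral_congr
      (g := fun x => x * F x - μ * (x ^ 2 * F x)) ?_]
    · rw [integral_sub hi1 ((hik 2).const_mul μ), intervalIntegral.integral_const_mul, I1, I2]
      ring
    · intro x hx
      rw [hF]
      dsimp only
      split_ifs with h
      · ring
      · ring
  · rw [intervalIntegral.integral_congr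
      (g := fun x => x ^ 2 * F x - μ * (x ^ 3 * F x)) ?_]
    · rw [integral_sub (hik 2) ((hik 3).const_mul μ), intervalIntegral.integral_const_mul, I3, I2]
      ring
    · intro x hx
      rw [hF]
      dsimp only
      split_ifs with h
      · ring
      · ring
end KonnoAux

/-- Konno's density function `f(x; (α,β))` for the one-dimensional quantum walk with coin
`U = [[a,b],[c,d]]` and initial qubit `(α,β)`. -/
noncomputable def konnoDensity (a b α β : ℂ) (x : ℝ) : ℝ :=
  if -‖a‖ < x ∧ x < ‖a‖ then
    (Real.sqrt (1 - ‖a‖ ^ 2) / (Real.pi * (1 - x ^ 2) * Real.sqrt (‖a‖ ^ 2 - x ^ 2))) *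
      (1 - (‖α‖ ^ 2 - ‖β‖ ^ 2 +
        (a * α * (starRingEnd ℂ) (b * β) + (starRingEnd ℂ) (a * α) * (b * β)).re / ‖a‖ ^ 2) * x)
  else 0

theorem konnoDensity_moments
    (a b c d α β : ℂ)
    (hU : !![a, b; c, d] ∈ Matrix.unitaryGroup (Fin 2) ℂ)
    (habcd : a * b * c * d ≠ 0)
    (hφ : ‖α‖ ^ 2 + ‖β‖ ^ 2 = 1) :
    (∫ x in (-‖a‖)..‖a‖, x * konnoDensity a b α β x) =
      -(‖α‖ ^ 2 - ‖β‖ ^ 2 +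
          (a * α * (starRingEnd ℂ) (b * β) + (starRingEnd ℂ) (a * α) * (b * β)).re / ‖a‖ ^ 2) *
        (1 - Real.sqrt (1 - ‖a‖ ^ 2)) ∧
    (∫ x in (-‖a‖)..‖a‖, x ^ 2 * konnoDensity a b α β x) = 1 - Real.sqrt (1 - ‖a‖ ^ 2) := by
  have ha : a ≠ 0 := by intro h; apply habcd; rw [h]; ring
  have hc : c ≠ 0 := by intro h; apply habcd; rw [h]; ring
  have hr0 : 0 < ‖a‖ := norm_pos_iff.mpr ha
  have hr1 : ‖a‖ < 1 := by
    have h00 := congrFun (congrFun hU.1 0) 0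
    simp [Matrix.mul_apply, Fin.sum_univ_two, Matrix.one_apply, Matrix.star_apply] at h00
    have hre := congrArg Complex.re h00
    simp [Complex.conj_mul', Complex.normSq_eq_norm_sq, ← Complex.ofReal_pow] at hre
    have hana : ‖a‖ ^ 2 + ‖c‖ ^ 2 = 1 := by
      simpa using hre
    have hc0 : 0 < ‖c‖ := norm_pos_iff.mpr hc
    nlinarith
  have h := KonnoAux.moments_aux (‖a‖)
    (‖α‖ ^ 2 - ‖β‖ ^ 2 +
      (a * α * (starRingEnd ℂ) (b * β) + (starRingEnd ℂ) (a * α) * (b * β)).re / ‖a‖ ^ 2)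
    hr0 hr1
  constructor
  · simpa only [konnoDensity] using h.1
  · simpa only [konnoDensity] using h.2
end

section
/- Let V be a finite-dimensional complex inner product space, U : V → V a unitary operator, (v_k)_{k∈K} an orthonormal basis of V with U·v_k = λ_k·v_k for each k, ψ₀ = Σ_k a_k·v_k a unit vector, and e ∈ V. Then the time-averaged transition probabilities converge: lim_{T→∞} (1/T) · Σ_{t=0}^{T−1} |⟨e, U^t ψ₀⟩|² = Σ_{(i,j)∈K×K, λ_i = λ_j} a_i·conj(a_j)·⟨e, v_i⟩·conj(⟨e, v_j⟩). -/
open Filter Topology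

private lemma cesaro_pow (μ : ℂ) (hμ : ‖μ‖ = 1) :
    Tendsto (fun T : ℕ => (T : ℂ)⁻¹ * ∑ t ∈ Finset.range T, μ ^ t) atTop
      (𝓝 (if μ = 1 then 1 else 0)) := by
  by_cases h : μ = 1
  · simp only [h, if_pos, one_pow, Finset.sum_const, Finset.card_range, nsmul_eq_mul, mul_one]
    have he : ∀ᶠ T : ℕ in atTop, (1 : ℂ) = (T : ℂ)⁻¹ * T := by
      filter_upwards [eventually_ne_atTop 0] with T hT
      rw [inv_mul_cancel₀ (by exact_mod_cast hT)]
    exact tendsto_const_nhds.congr' he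
  · rw [if_neg h]
    have hb : ∀ T : ℕ, ‖(T : ℂ)⁻¹ * ∑ t ∈ Finset.range T, μ ^ t‖ ≤ (T : ℝ)⁻¹ * (2 / ‖μ - 1‖) := by
      intro T
      rw [norm_mul, norm_inv, Complex.norm_natCast]
      have h2 : ‖∑ t ∈ Finset.range T, μ ^ t‖ ≤ 2 / ‖μ - 1‖ := by
        rw [geom_sum_eq h, norm_div]
        apply div_le_div_of_nonneg_right ?_ ?_ |>.trans_eq rfl
        · calc ‖μ ^ T - 1‖ ≤ ‖μ ^ T‖ + ‖(1:ℂ)‖ := norm_sub_le _ _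
            _ = 2 := by rw [norm_pow, hμ, one_pow, norm_one]; norm_num
        · exact norm_nonneg _
      exact mul_le_mul_of_nonneg_left h2 (by positivity)
    have hg : Tendsto (fun T : ℕ => (T : ℝ)⁻¹ * (2 / ‖μ - 1‖)) atTop (𝓝 0) := by
      simpa using (tendsto_inv_atTop_nhds_zero_nat (𝕜 := ℝ)).mul_const (2 / ‖μ - 1‖)
    exact squeeze_zero_norm hb hg

theorem time_averaged_transition_probability
    {V : Type*} [NormedAddCommGroup V] [InnerProductSpace ℂ V] [FiniteDimensional ℂ V]
    {K : Type*} [Fintype K] [DecidableEq K]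
    (U : V →ₗ[ℂ] V)
    (hU : ∀ x y : V, (inner ℂ (U x) (U y) : ℂ) = inner ℂ x y)
    (v : OrthonormalBasis K ℂ V)
    (lam : K → ℂ) (hEig : ∀ k : K, U (v k) = lam k • v k)
    (a : K → ℂ) (ψ₀ : V) (hψ₀ : ψ₀ = ∑ k : K, a k • v k) (hunit : ‖ψ₀‖ = 1)
    (e : V) :
    Tendsto (fun T : ℕ =>
        (((T : ℂ))⁻¹ * ∑ t ∈ Finset.range T, ((‖(inner ℂ e ((U ^ t) ψ₀) : ℂ)‖ ^ 2 : ℝ) : ℂ)))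
      atTop
      (𝓝 (∑ p ∈ Finset.univ.filter (fun p : K × K => lam p.1 = lam p.2),
            a p.1 * (starRingEnd ℂ) (a p.2) * (inner ℂ e (v p.1) : ℂ) *
              (starRingEnd ℂ) ((inner ℂ e (v p.2) : ℂ)))) := by
  classical
  have hvv : ∀ k : K, (inner ℂ (v k) (v k) : ℂ) = 1 := by
    intro k
    simpa using orthonormal_iff_ite.mp v.orthonormal k k
  have hnorm1 : ∀ k : K, (starRingEnd ℂ) (lam k) * lam k = 1 := by
    intro k
    have h1 := hU (v k) (v k)
    rw [hEig k, inner_smul_left, inner_smul_right, hvv k] at h1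
    simpa [hvv k, mul_assoc] using h1
  have hlamne : ∀ k : K, lam k ≠ 0 := by
    intro k hk
    have := hnorm1 k
    rw [hk] at this; simp at this
  have hlamnorm : ∀ k : K, ‖lam k‖ = 1 := by
    intro k
    have h := hnorm1 k
    have h3 : Complex.normSq (lam k) = 1 := by
      rw [← Complex.normSq_eq_conj_mul_self] at h; exact_mod_cast h
    have h4 : ‖lam k‖ ^ 2 = 1 := by
      rw [Complex.sq_norm]; exact h3
    nlinarith [norm_nonneg (lam k)]
  let c : K × K → ℂ := fun p =>
    a p.1 * (starRingEnd ℂ) (a p.2) * (inner ℂ e (v p.1) : ℂ) *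
      (starRingEnd ℂ) ((inner ℂ e (v p.2) : ℂ))
  let μ : K × K → ℂ := fun p => lam p.1 * (starRingEnd ℂ) (lam p.2)
  have hpow : ∀ (t : ℕ) (k : K), (U ^ t) (v k) = lam k ^ t • v k := by
    intro t k
    induction t with
    | zero => simp
    | succ n ih =>
        rw [pow_succ', Module.End.mul_apply, ih, map_smul, hEig k, smul_smul, ← pow_succ]
  have hval : ∀ t : ℕ, (inner ℂ e ((U ^ t) ψ₀) : ℂ)
      = ∑ k : K, a k * lam k ^ t * (inner ℂ e (v k) : ℂ) := by
    intro t
    rw [hψ₀, map_sum, inner_sum]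
    refine Finset.sum_congr rfl fun k _ => ?_
    rw [map_smul, hpow t k, inner_smul_right, inner_smul_right]
    ring
  have hsq : ∀ t : ℕ, ((‖(inner ℂ e ((U ^ t) ψ₀) : ℂ)‖ ^ 2 : ℝ) : ℂ)
      = ∑ p : K × K, c p * μ p ^ t := by
    intro t
    have hz : ((‖(inner ℂ e ((U ^ t) ψ₀) : ℂ)‖ ^ 2 : ℝ) : ℂ)
        = (inner ℂ e ((U ^ t) ψ₀) : ℂ) * (starRingEnd ℂ) (inner ℂ e ((U ^ t) ψ₀) : ℂ) := by
      rw [Complex.mul_conj']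
      push_cast
      ring
    rw [hz, hval, map_sum, Finset.sum_mul_sum, ← Finset.sum_product']
    refine Finset.sum_congr rfl fun p _ => ?_
    show _ = c p * μ p ^ t
    simp only [c, μ, map_mul, map_pow, mul_pow]
    ring
  have hfun : ∀ T : ℕ,
      (((T : ℂ))⁻¹ * ∑ t ∈ Finset.range T, ((‖(inner ℂ e ((U ^ t) ψ₀) : ℂ)‖ ^ 2 : ℝ) : ℂ))
      = ∑ p : K × K, c p * ((T : ℂ)⁻¹ * ∑ t ∈ Finset.range T, μ p ^ t) := by
    intro T
    simp only [hsq]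
    rw [Finset.sum_comm, Finset.mul_sum]
    refine Finset.sum_congr rfl fun p _ => ?_
    rw [Finset.mul_sum, Finset.mul_sum, Finset.mul_sum]
    exact Finset.sum_congr rfl fun t _ => by ring
  have hcond : ∀ p : K × K, (μ p = 1) ↔ lam p.1 = lam p.2 := by
    intro p
    constructor
    · intro h
      have h2 : lam p.1 * (starRingEnd ℂ) (lam p.2) = lam p.2 * (starRingEnd ℂ) (lam p.2) := by
        rw [show lam p.1 * (starRingEnd ℂ) (lam p.2) = (1:ℂ) from h, mul_comm]
        exact (hnorm1 p.2).symm
      have hne : (starRingEnd ℂ) (lam p.2) ≠ 0 := by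
        simpa using hlamne p.2
      exact mul_right_cancel₀ hne h2
    · intro h
      show lam p.1 * (starRingEnd ℂ) (lam p.2) = 1
      rw [h, mul_comm]; exact hnorm1 p.2
  have hlim : Tendsto
      (fun T : ℕ => ∑ p : K × K, c p * ((T : ℂ)⁻¹ * ∑ t ∈ Finset.range T, μ p ^ t))
      atTop (𝓝 (∑ p : K × K, c p * (if μ p = 1 then 1 else 0))) := by
    refine tendsto_finset_sum _ fun p _ => ?_
    refine (cesaro_pow (μ p) ?_).const_mul (c p)
    show ‖lam p.1 * (starRingEnd ℂ) (lam p.2)‖ = 1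
    rw [norm_mul, RCLike.norm_conj, hlamnorm, hlamnorm, mul_one]
  have hfinal : (∑ p : K × K, c p * (if μ p = 1 then (1:ℂ) else 0))
      = ∑ p ∈ Finset.univ.filter (fun p : K × K => lam p.1 = lam p.2), c p := by
    rw [Finset.sum_filter]
    refine Finset.sum_congr rfl fun p _ => ?_
    by_cases h : lam p.1 = lam p.2
    · rw [if_pos h, if_pos ((hcond p).mpr h), mul_one]
    · rw [if_neg h, if_neg (fun hh => h ((hcond p).mp hh)), mul_zero]
  have := hlim.congr (fun T => (hfun T).symm)
  rw [hfinal] at this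
  exact this
end

section
/- (Meyer's no-go theorem for coinless homogeneous quantum walks on ℤ.) Let a, b, c ∈ ℂ and consider the translation-invariant nearest-neighbor evolution sending ψ : ℤ → ℂ to ψ' with ψ'(n) = a·ψ(n+1) + b·ψ(n) + c·ψ(n−1). If this evolution preserves the ℓ² norm, i.e. Σ_{n∈ℤ} |ψ'(n)|² = Σ_{n∈ℤ} |ψ(n)|² for every finitely supported ψ : ℤ → ℂ, then exactly one of a, b, c is nonzero and it has modulus 1; that is, either (|a| = 1 and b = c = 0), or (|b| = 1 and a = c = 0), or (|c| = 1 and a = b = 0). In particular, a quantum particle moving at each step in superposition both to the left and to the right with nonzero amplitudes is impossible: the only unitary homogeneous scalar evolutions are trivial motions in a single direction (or standing still) up to a phase. -/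
theorem meyer_no_go
    (a b c : ℂ)
    (hnorm : ∀ ψ : ℤ → ℂ, (Function.support ψ).Finite →
      (∑' n : ℤ, ‖a * ψ (n + 1) + b * ψ n + c * ψ (n - 1)‖ ^ 2) = ∑' n : ℤ, ‖ψ n‖ ^ 2) :
    (‖a‖ = 1 ∧ b = 0 ∧ c = 0) ∨ (‖b‖ = 1 ∧ a = 0 ∧ c = 0) ∨
      (‖c‖ = 1 ∧ a = 0 ∧ b = 0) := by
  -- delta at 0
  have E1 : ‖a‖^2 + ‖b‖^2 + ‖c‖^2 = 1 := by
    set ψ : ℤ → ℂ := fun n => if n = 0 then 1 else 0 with hψ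
    have hfin : (Function.support ψ).Finite := by
      apply Set.Finite.subset (Set.finite_singleton (0 : ℤ))
      intro n hn
      rcases eq_or_ne n 0 with h | h
      · simp [h]
      · exact absurd (if_neg h) hn
    have h := hnorm ψ hfin
    rw [tsum_eq_sum (s := ({-1, 0, 1} : Finset ℤ))
        (by intro n hn
            simp only [Finset.mem_insert, Finset.mem_singleton, not_or] at hn
            have h1 : n + 1 ≠ 0 := by omega
            have h2 : n ≠ 0 := hn.2.1
            have h3 : n - 1 ≠ 0 := by omega
            simp [hψ, h1, h2, h3]),
      tsum_eq_sum (s := ({0} : Finset ℤ))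
        (by intro n hn
            simp only [Finset.mem_singleton] at hn
            simp [hψ, hn])] at h
    norm_num [hψ] at h
    linarith [h]
  -- two-point functions at 0 and 1
  have key2 : ∀ t : ℂ, ‖a‖^2 + ‖a*t+b‖^2 + ‖b*t+c‖^2 + ‖c*t‖^2 = 1 + ‖t‖^2 := by
    intro t
    set ψ : ℤ → ℂ := fun n => if n = 0 then 1 else if n = 1 then t else 0 with hψ
    have hfin : (Function.support ψ).Finite := by
      apply Set.Finite.subset ((Set.finite_singleton (0 : ℤ)).insert 1)
      intro n hn
      rcases eq_or_ne n 0 with h | h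
      · simp [h]
      rcases eq_or_ne n 1 with h' | h'
      · simp [h']
      · exact absurd (by simp [hψ, h, h']) hn
    have h := hnorm ψ hfin
    rw [tsum_eq_sum (s := ({-1, 0, 1, 2} : Finset ℤ))
        (by intro n hn
            simp only [Finset.mem_insert, Finset.mem_singleton, not_or] at hn
            have h1 : n + 1 ≠ 0 := by omega
            have h1' : n + 1 ≠ 1 := by omega
            have h2 : n ≠ 0 := by omega
            have h2' : n ≠ 1 := by omega
            have h3 : n - 1 ≠ 0 := by omega
            have h3' : n - 1 ≠ 1 := by omega
            simp [hψ, h1, h1', h2, h2', h3, h3']),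
      tsum_eq_sum (s := ({0, 1} : Finset ℤ))
        (by intro n hn
            simp only [Finset.mem_insert, Finset.mem_singleton, not_or] at hn
            simp [hψ, hn.1, hn.2])] at h
    norm_num [hψ] at h
    simp only [norm_mul]
    linarith [h]
  -- two-point functions at 0 and 2
  have key3 : ∀ t : ℂ, ‖a‖^2 + ‖b‖^2 + ‖a*t+c‖^2 + ‖b*t‖^2 + ‖c*t‖^2 = 1 + ‖t‖^2 := by
    intro t
    set ψ : ℤ → ℂ := fun n => if n = 0 then 1 else if n = 2 then t else 0 with hψ
    have hfin : (Function.support ψ).Finite := by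
      apply Set.Finite.subset ((Set.finite_singleton (0 : ℤ)).insert 2)
      intro n hn
      rcases eq_or_ne n 0 with h | h
      · simp [h]
      rcases eq_or_ne n 2 with h' | h'
      · simp [h']
      · exact absurd (by simp [hψ, h, h']) hn
    have h := hnorm ψ hfin
    rw [tsum_eq_sum (s := ({-1, 0, 1, 2, 3} : Finset ℤ))
        (by intro n hn
            simp only [Finset.mem_insert, Finset.mem_singleton, not_or] at hn
            have h1 : n + 1 ≠ 0 := by omega
            have h1' : n + 1 ≠ 2 := by omega
            have h2 : n ≠ 0 := by omega
            have h2' : n ≠ 2 := by omega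
            have h3 : n - 1 ≠ 0 := by omega
            have h3' : n - 1 ≠ 2 := by omega
            simp [hψ, h1, h1', h2, h2', h3, h3']),
      tsum_eq_sum (s := ({0, 2} : Finset ℤ))
        (by intro n hn
            simp only [Finset.mem_insert, Finset.mem_singleton, not_or] at hn
            simp [hψ, hn.1, hn.2])] at h
    norm_num [hψ] at h
    simp only [norm_mul]
    linarith [h]
  -- extract cross-term equations
  have sqn : ∀ z : ℂ, ‖z‖^2 = Complex.normSq z := fun z => Complex.sq_norm z
  have hab : a * starRingEnd ℂ b + b * starRingEnd ℂ c = 0 := by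
    have h1 := key2 1
    have hI := key2 Complex.I
    simp only [mul_one, sqn, Complex.normSq_add, Complex.normSq_mul, Complex.normSq_I,
      Complex.normSq_one] at h1 hI
    have hre : (a * starRingEnd ℂ b).re + (b * starRingEnd ℂ c).re = 0 := by
      have := E1
      simp only [sqn] at this
      nlinarith [h1, this]
    have him : (a * starRingEnd ℂ b).im + (b * starRingEnd ℂ c).im = 0 := by
      have := E1
      simp only [sqn] at this
      have e1 : (a * Complex.I * starRingEnd ℂ b).re = -(a * starRingEnd ℂ b).im := by
        simp [Complex.mul_re, Complex.mul_im]; try ring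
      have e2 : (b * Complex.I * starRingEnd ℂ c).re = -(b * starRingEnd ℂ c).im := by
        simp [Complex.mul_re, Complex.mul_im]; try ring
      nlinarith [hI, this, e1, e2]
    apply Complex.ext
    · simp only [Complex.add_re, Complex.zero_re]; exact hre
    · simp only [Complex.add_im, Complex.zero_im]; exact him
  have hac : a * starRingEnd ℂ c = 0 := by
    have h1 := key3 1
    have hI := key3 Complex.I
    simp only [mul_one, sqn, Complex.normSq_add, Complex.normSq_mul, Complex.normSq_I,
      Complex.normSq_one] at h1 hI
    have hre : (a * starRingEnd ℂ c).re = 0 := by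
      have := E1
      simp only [sqn] at this
      nlinarith [h1, this]
    have him : (a * starRingEnd ℂ c).im = 0 := by
      have := E1
      simp only [sqn] at this
      have e1 : (a * Complex.I * starRingEnd ℂ c).re = -(a * starRingEnd ℂ c).im := by
        simp [Complex.mul_re, Complex.mul_im]; try ring
      nlinarith [hI, this, e1]
    exact Complex.ext hre him
  -- case analysis
  have norm1 : ∀ x : ℂ, ‖x‖^2 = 1 → ‖x‖ = 1 := by
    intro x hx
    nlinarith [norm_nonneg x]
  rcases mul_eq_zero.mp hac with ha | hc
  · -- a = 0
    have ha0 : a = 0 := ha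
    rw [ha0, zero_mul, zero_add] at hab
    rcases mul_eq_zero.mp hab with hb | hc
    · right; right
      refine ⟨norm1 c ?_, ha0, hb⟩
      rw [ha0, hb] at E1; simpa using E1
    · have hc0 : c = 0 := by simpa using hc
      right; left
      refine ⟨norm1 b ?_, ha0, hc0⟩
      rw [ha0, hc0] at E1; simpa using E1
  · -- c = 0
    have hc0 : c = 0 := by simpa using hc
    rw [hc0, map_zero, mul_zero, add_zero] at hab
    rcases mul_eq_zero.mp hab with ha | hb
    · right; left
      refine ⟨norm1 b ?_, ha, hc0⟩
      rw [ha, hc0] at E1; simpa using E1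
    · have hb0 : b = 0 := by simpa using hb
      left
      refine ⟨norm1 a ?_, hb0, hc0⟩
      rw [hb0, hc0] at E1; simpa using E1
end
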